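/- arXiv:2111.11275 — 5 statements merged into one kernel-verified Lean document; each statement's English description precedes it below -/
import Mathlib

section
/- Any set of pairwise commuting generalized Pauli matrices in dimension d, regarded via their coordinates as pairs (m,n) ∈ ℤ_d × ℤ_d with the commutation condition m'n − mn' ≡ 0 (mod d), has cardinality at most d. -/
/-- Any pairwise commuting set of generalized Pauli coordinates has at most `d` elements. -/
theorem card_le_of_pairwise_comm (d : ℕ) (hd : 2 ≤ d)
    (S : Finset (ZMod d × ZMod d))
    (h : ∀ p ∈ S, ∀ q ∈ S, p.1 * q.2 - q.1 * p.2 = 0) :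
    S.card ≤ d := by
  haveI : NeZero d := ⟨by omega⟩
  set H : AddSubgroup (ZMod d × ZMod d) := AddSubgroup.closure ↑S with hHdef
  -- the symplectic pairing vanishes on all of H
  have hB : ∀ p ∈ H, ∀ q ∈ H, p.1 * q.2 - q.1 * p.2 = 0 := by
    have step1 : ∀ p ∈ S, ∀ q ∈ H, p.1 * q.2 - q.1 * p.2 = 0 := by
      intro p hp q hq
      induction hq using AddSubgroup.closure_induction with
      | mem x hx => exact h p hp x hx
      | zero => simp
      | add x y hx hy ihx ihy =>
          have : p.1 * (x + y).2 - (x + y).1 * p.2 =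
              (p.1 * x.2 - x.1 * p.2) + (p.1 * y.2 - y.1 * p.2) := by
            simp [Prod.fst_add, Prod.snd_add]; ring
          rw [this, ihx, ihy, add_zero]
      | neg x hx ihx =>
          have : p.1 * (-x).2 - (-x).1 * p.2 = -(p.1 * x.2 - x.1 * p.2) := by
            simp; ring
          rw [this, ihx, neg_zero]
    intro p hp q hq
    induction hp using AddSubgroup.closure_induction with
    | mem x hx => exact step1 x hx q hq
    | zero => simp
    | add x y hx hy ihx ihy =>
        have : (x + y).1 * q.2 - q.1 * (x + y).2 =
            (x.1 * q.2 - q.1 * x.2) + (y.1 * q.2 - q.1 * y.2) := by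
          simp [Prod.fst_add, Prod.snd_add]; ring
        rw [this, ihx, ihy, add_zero]
    | neg x hx ihx =>
        have : (-x).1 * q.2 - q.1 * (-x).2 = -(x.1 * q.2 - q.1 * x.2) := by
          simp; ring
        rw [this, ihx, neg_zero]
  -- projection to first coordinate
  set f : H →+ ZMod d := (AddMonoidHom.fst (ZMod d) (ZMod d)).comp H.subtype with hfdef
  set A : AddSubgroup (ZMod d) := f.range with hAdef
  obtain ⟨g, hg⟩ := IsAddCyclic.exists_generator (α := A)
  set a : ZMod d := (g : ZMod d) with hadef
  -- A = zmultiples a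
  have hAz : A = AddSubgroup.zmultiples a := by
    apply le_antisymm
    · intro x hx
      obtain ⟨n, hn⟩ := hg ⟨x, hx⟩
      exact ⟨n, congrArg Subtype.val hn⟩
    · exact (AddSubgroup.zmultiples_le).mpr g.2
  have hcardA : Nat.card A = addOrderOf a := by
    rw [hAz, Nat.card_zmultiples]
  -- multiplication by a
  set m : ZMod d →+ ZMod d := AddMonoidHom.mulLeft a with hmdef
  have hmrange : m.range = AddSubgroup.zmultiples a := by
    ext x
    constructor
    · rintro ⟨y, rfl⟩
      refine ⟨(y.val : ℤ), ?_⟩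
      simp [hmdef, zsmul_eq_mul]
      exact mul_comm y a
    · rintro ⟨n, rfl⟩
      exact ⟨(n : ZMod d), by simp [hmdef, zsmul_eq_mul]; ring⟩
  -- counting for m : d = addOrderOf a * card (ker m)
  have hcount : d = addOrderOf a * Nat.card m.ker := by
    have h1 := AddSubgroup.card_eq_card_quotient_mul_card_addSubgroup m.ker
    have h2 : Nat.card (ZMod d ⧸ m.ker) = Nat.card m.range :=
      Nat.card_congr (QuotientAddGroup.quotientKerEquivRange m).toEquiv
    have h3 : Nat.card m.range = addOrderOf a := by rw [hmrange, Nat.card_zmultiples]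
    rw [Nat.card_zmod, h2, h3] at h1
    exact h1
  -- counting for f : card H = card A * card (ker f)
  have hcountH : Nat.card H = Nat.card A * Nat.card f.ker := by
    have h1 := AddSubgroup.card_eq_card_quotient_mul_card_addSubgroup f.ker
    have h2 : Nat.card (H ⧸ f.ker) = Nat.card A :=
      Nat.card_congr (QuotientAddGroup.quotientKerEquivRange f).toEquiv
    rw [h1, h2]
  -- ker f injects into ker m
  have hker : Nat.card f.ker ≤ Nat.card m.ker := by
    have ha_mem : a ∈ A := g.2
    obtain ⟨hh, hhh⟩ := ha_mem
    refine Nat.card_le_card_of_injective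
      (fun k => (⟨((k : H) : ZMod d × ZMod d).2, ?_⟩ : m.ker)) ?_
    · have hk0 : ((k : H) : ZMod d × ZMod d).1 = 0 := k.2
      have := hB _ hh.2 _ (k : H).2
      rw [AddMonoidHom.mem_ker]
      have hha : ((hh : H) : ZMod d × ZMod d).1 = a := hhh
      simp [hmdef]
      rw [hha, hk0] at this
      linear_combination this
    · intro k k' hkk
      have h2 : ((k : H) : ZMod d × ZMod d).2 = ((k' : H) : ZMod d × ZMod d).2 :=
        congrArg Subtype.val hkk
      have e1 : ((k : H) : ZMod d × ZMod d).1 = 0 := k.2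
      have e2 : ((k' : H) : ZMod d × ZMod d).1 = 0 := k'.2
      have h1 : ((k : H) : ZMod d × ZMod d).1 = ((k' : H) : ZMod d × ZMod d).1 := by
        rw [e1, e2]
      ext
      · exact h1
      · exact h2
  -- S injects into H
  have hS : S.card ≤ Nat.card H := by
    rw [← Nat.card_eq_finsetCard]
    exact Nat.card_le_card_of_injective
      (fun x => (⟨x.val, AddSubgroup.subset_closure x.2⟩ : H))
      (fun x y hxy => by
        apply Subtype.ext
        exact congrArg (fun z : H => z.val) hxy)
  calc S.card ≤ Nat.card H := hS
    _ = Nat.card A * Nat.card f.ker := hcountH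
    _ ≤ Nat.card A * Nat.card m.ker := Nat.mul_le_mul_left _ hker
    _ = addOrderOf a * Nat.card m.ker := by rw [hcardA]
    _ = d := hcount.symm
end

section
/- Every maximally commutative subset of ℤ_d × ℤ_d (under the commutativity relation mn' − m'n ≡ 0 mod d) is a subgroup of ℤ_d × ℤ_d. -/
/-- Two pairs `(m,n)` and `(m',n')` in `ℤ_d × ℤ_d` are commutative (the corresponding
generalized Pauli matrices commute) iff `m n' − m' n ≡ 0 (mod d)`. -/
def CommPair {d : ℕ} (p q : ZMod d × ZMod d) : Prop :=
  p.1 * q.2 - q.1 * p.2 = 0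

/-- A subset of `ℤ_d × ℤ_d` is maximally commutative if its elements pairwise commute
and every element commuting with all its members belongs to it. -/
def IsMaxComm {d : ℕ} (C : Set (ZMod d × ZMod d)) : Prop :=
  (∀ p ∈ C, ∀ q ∈ C, CommPair p q) ∧ (∀ p, (∀ q ∈ C, CommPair p q) → p ∈ C)

/-- Every maximally commutative subset of `ℤ_d × ℤ_d` is a subgroup. -/
theorem maxComm_is_subgroup (d : ℕ) (hd : 2 ≤ d)
    (C : Set (ZMod d × ZMod d)) (hC : IsMaxComm C) :
    ∃ H : AddSubgroup (ZMod d × ZMod d), (H : Set (ZMod d × ZMod d)) = C := by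
  obtain ⟨hpair, hmax⟩ := hC
  refine ⟨{ carrier := C
            zero_mem' := ?_
            add_mem' := ?_
            neg_mem' := ?_ }, rfl⟩
  · intro a b ha hb
    apply hmax
    intro q hq
    have h1 := hpair a ha q hq
    have h2 := hpair b hb q hq
    simp only [CommPair, Prod.fst_add, Prod.snd_add] at *
    ring_nf
    linear_combination h1 + h2
  · exact hmax 0 (fun q _ => by simp [CommPair])
  · intro a ha
    apply hmax
    intro q hq
    have h1 := hpair a ha q hq
    simp only [CommPair, Prod.fst_neg, Prod.snd_neg] at *
    linear_combination -h1
end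

section
/- For d ≥ 3 and (i,j) ∈ ℤ_d × ℤ_d with i ≠ 0, the set C_{i,j} := {(x,y) ∈ ℤ_d × ℤ_d : iy − jx ≡ 0 (mod d) and x ∈ iℤ_d} has exactly d elements. -/
/-- The set `C_{i,j} = {(x,y) ∈ ℤ_d × ℤ_d : i y − j x ≡ 0 (mod d), x ∈ iℤ_d}`. -/
def Cij {d : ℕ} (i j : ZMod d) : Set (ZMod d × ZMod d) :=
  {p | i * p.2 - j * p.1 = 0 ∧ ∃ k : ZMod d, p.1 = i * k}

/-- For `i ≠ 0`, the set `C_{i,j}` has exactly `d` elements. -/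
theorem Cij_ncard (d : ℕ) (hd : 3 ≤ d) (i j : ZMod d) (hi : i ≠ 0) :
    (Cij i j).ncard = d := by
  haveI : NeZero d := ⟨by omega⟩
  -- the hom F(k,t) = (i k, j k + t)
  let F : (ZMod d × ZMod d) →+ (ZMod d × ZMod d) :=
    { toFun := fun p => (i * p.1, j * p.1 + p.2)
      map_zero' := by simp
      map_add' := by
        intro p q
        refine Prod.ext_iff.mpr ⟨?_, ?_⟩
        · show i * (p.1 + q.1) = i * p.1 + i * q.1
          ring
        · show j * (p.1 + q.1) + (p.2 + q.2) = (j * p.1 + p.2) + (j * q.1 + q.2)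
          ring }
  -- the subgroup S = {(k,t) : i t = 0}
  let S : AddSubgroup (ZMod d × ZMod d) :=
    { carrier := {p | i * p.2 = 0}
      zero_mem' := by show i * (0 : ZMod d) = 0; rw [mul_zero]
      add_mem' := by
        intro a b ha hb
        have ha' : i * a.2 = 0 := ha
        have hb' : i * b.2 = 0 := hb
        show i * (a.2 + b.2) = 0
        rw [mul_add, ha', hb', add_zero]
      neg_mem' := by
        intro a ha
        have ha' : i * a.2 = 0 := ha
        show i * (-a.2) = 0
        rw [mul_neg, ha', neg_zero] }
  let φ : S →+ (ZMod d × ZMod d) := F.comp S.subtype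
  -- Cij = range φ
  have hC : Cij i j = (φ.range : Set (ZMod d × ZMod d)) := by
    ext ⟨x, y⟩
    constructor
    · rintro ⟨h1, k, hk⟩
      have h1' : i * y - j * x = 0 := h1
      have hk' : x = i * k := hk
      refine ⟨⟨(k, y - j * k), ?_⟩, ?_⟩
      · show i * (y - j * k) = 0
        linear_combination h1' + j * hk'
      · show (i * k, j * k + (y - j * k)) = (x, y)
        exact Prod.ext_iff.mpr ⟨hk'.symm, by ring⟩
    · rintro ⟨⟨⟨k, t⟩, ht⟩, hkt⟩
      have ht' : i * t = 0 := ht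
      have hkt' : (i * k, j * k + t) = (x, y) := hkt
      have hx : x = i * k := (Prod.ext_iff.mp hkt').1.symm
      have hy : y = j * k + t := (Prod.ext_iff.mp hkt').2.symm
      refine ⟨?_, k, hx⟩
      show i * y - j * x = 0
      rw [hx, hy]; linear_combination ht'
  let K := Nat.card {t : ZMod d // i * t = 0}
  -- |S| = d * K
  have hS : Nat.card S = d * K := by
    have e : S ≃ ZMod d × {t : ZMod d // i * t = 0} :=
      { toFun := fun s => (s.1.1, ⟨s.1.2, s.2⟩)
        invFun := fun p => ⟨(p.1, p.2.1), p.2.2⟩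
        left_inv := fun s => rfl
        right_inv := fun p => rfl }
    rw [Nat.card_congr e, Nat.card_prod, Nat.card_eq_fintype_card, ZMod.card]
  -- |ker φ| = K
  have hker : Nat.card φ.ker = K := by
    have e : φ.ker ≃ {t : ZMod d // i * t = 0} :=
      { toFun := fun s => ⟨s.1.1.1, by
          have h : (i * s.1.1.1, j * s.1.1.1 + s.1.1.2) = ((0, 0) : ZMod d × ZMod d) := s.2
          exact (Prod.ext_iff.mp h).1⟩
        invFun := fun t => ⟨⟨(t.1, -(j * t.1)), by
            show i * -(j * t.1) = 0
            rw [mul_neg, mul_left_comm, t.2, mul_zero, neg_zero]⟩, by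
          show (i * t.1, j * t.1 + -(j * t.1)) = ((0, 0) : ZMod d × ZMod d)
          rw [t.2, add_neg_cancel]⟩
        left_inv := by
          rintro ⟨⟨⟨k, t⟩, ht⟩, hk⟩
          have h : (i * k, j * k + t) = ((0, 0) : ZMod d × ZMod d) := hk
          have h2 := (Prod.ext_iff.mp h).2
          have ht2 : t = -(j * k) := by linear_combination h2
          subst ht2
          rfl
        right_inv := fun t => rfl }
    rw [Nat.card_congr e]
  -- first isomorphism theorem counting
  have hcount : Nat.card S = Nat.card φ.range * Nat.card φ.ker := by
    rw [AddSubgroup.card_eq_card_quotient_mul_card_addSubgroup φ.ker,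
      Nat.card_congr (QuotientAddGroup.quotientKerEquivRange φ).toEquiv]
  haveI : Nonempty {t : ZMod d // i * t = 0} := ⟨⟨0, by rw [mul_zero]⟩⟩
  have hKpos : 0 < K := Nat.card_pos
  have hdK : d * K = Nat.card φ.range * K := by rw [← hS, hcount, hker]
  have hrange : Nat.card φ.range = d := (Nat.eq_of_mul_eq_mul_right hKpos hdK).symm
  rw [hC, ← Nat.card_coe_set_eq, SetLike.coe_sort_coe]
  exact hrange
end

section
/- For d ≥ 3 and (i,j) ∈ ℤ_d × ℤ_d with i ≠ 0, the set C_{i,j} := {(x,y) : iy − jx ≡ 0 (mod d), x ∈ iℤ_d} is pairwise commutative: for any (x₁,y₁),(x₂,y₂) ∈ C_{i,j}, x₁y₂ − x₂y₁ ≡ 0 (mod d). -/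
/-- For `i ≠ 0`, the set `C_{i,j}` is pairwise commutative. -/
theorem Cij_pairwise_comm (d : ℕ) (hd : 3 ≤ d) (i j : ZMod d) (hi : i ≠ 0) :
    ∀ p ∈ Cij i j, ∀ q ∈ Cij i j, p.1 * q.2 - q.1 * p.2 = 0 := by
  rintro p ⟨h1, k, hk⟩ q ⟨h2, l, hl⟩
  linear_combination q.2 * hk - p.2 * hl + k * h2 - l * h1 + j * k * hl - j * l * hk
end

section
/- For d ≥ 3 and (i,j) ∈ ℤ_d × ℤ_d with i ≠ 0, the set C_{i,j} := {(x,y) : iy − jx ≡ 0 (mod d), x ∈ iℤ_d} is a maximally commutative set: its elements pairwise commute, and any (s,t) ∈ ℤ_d × ℤ_d commuting with all elements of C_{i,j} lies in C_{i,j}. -/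
/-- For `i ≠ 0`, the set `C_{i,j}` is maximally commutative: its elements pairwise
commute and any pair commuting with all of them lies in it. -/
theorem Cij_maxComm (d : ℕ) (hd : 3 ≤ d) (i j : ZMod d) (hi : i ≠ 0) :
    (∀ p ∈ Cij i j, ∀ q ∈ Cij i j, p.1 * q.2 - q.1 * p.2 = 0) ∧
    (∀ s t : ZMod d, (∀ p ∈ Cij i j, s * p.2 - p.1 * t = 0) → (s, t) ∈ Cij i j) := by
  have hd0 : d ≠ 0 := by omega
  haveI : NeZero d := ⟨hd0⟩
  constructor
  · rintro p ⟨hp1, k, hk⟩ q ⟨hq1, l, hl⟩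
    rw [hk] at hp1 ⊢
    rw [hl] at hq1 ⊢
    linear_combination k * hq1 - l * hp1
  · intro s t h
    have h1 : s * j - i * t = 0 := h (i, j) ⟨by ring, 1, by ring⟩
    refine ⟨by linear_combination -h1, ?_⟩
    set g : ℕ := Nat.gcd (ZMod.val i) d with hg
    have hgd : g ∣ d := Nat.gcd_dvd_right _ _
    have hgi : g ∣ ZMod.val i := Nat.gcd_dvd_left _ _
    have hgpos : 0 < g := Nat.gcd_pos_of_pos_right _ (by omega)
    have hdg : g * (d / g) = d := Nat.mul_div_cancel' hgd
    have hdgpos : 0 < d / g := Nat.div_pos (Nat.le_of_dvd (by omega) hgd) hgpos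
    -- (0, d/g) ∈ Cij
    have hmem : ((0 : ZMod d), ((d / g : ℕ) : ZMod d)) ∈ Cij i j := by
      refine ⟨?_, 0, by ring⟩
      have : i * ((d / g : ℕ) : ZMod d) = 0 := by
        have hi' : i = ((ZMod.val i : ℕ) : ZMod d) := (ZMod.natCast_zmod_val i).symm
        rw [hi', ← Nat.cast_mul]
        rw [ZMod.natCast_eq_zero_iff]
        obtain ⟨c, hc⟩ := hgi
        refine ⟨c, ?_⟩
        rw [hc]
        conv_rhs => rw [← hdg]
        ring
      simp [this]
    have h2 := h _ hmem
    simp only at h2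
    -- h2 : s * (d/g) - 0 * t = 0
    have hsdg : s * ((d / g : ℕ) : ZMod d) = 0 := by linear_combination h2
    have hdvd : g ∣ ZMod.val s := by
      have hs' : s = ((ZMod.val s : ℕ) : ZMod d) := (ZMod.natCast_zmod_val s).symm
      rw [hs', ← Nat.cast_mul, ZMod.natCast_eq_zero_iff] at hsdg
      obtain ⟨c, hc⟩ := hsdg
      have hc' : d * c = (g * c) * (d / g) := by
        conv_lhs => rw [← hdg]
        ring
      exact ⟨c, Nat.eq_of_mul_eq_mul_right hdgpos (hc.trans hc')⟩
    -- Bezout: (g : ZMod d) = i * a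
    have hbez : (g : ZMod d) = i * ((Nat.gcdA (ZMod.val i) d : ℤ) : ZMod d) := by
      have hb : (g : ℤ) = (ZMod.val i : ℤ) * Nat.gcdA (ZMod.val i) d
          + (d : ℤ) * Nat.gcdB (ZMod.val i) d := Nat.gcd_eq_gcd_ab _ _
      have := congrArg (fun z : ℤ => (z : ZMod d)) hb
      push_cast at this
      rw [ZMod.natCast_zmod_val] at this
      simpa [ZMod.natCast_self] using this
    refine ⟨((Nat.gcdA (ZMod.val i) d : ℤ) : ZMod d) * ((ZMod.val s / g : ℕ) : ZMod d), ?_⟩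
    have : s = ((g * (ZMod.val s / g) : ℕ) : ZMod d) := by
      rw [Nat.mul_div_cancel' hdvd, ZMod.natCast_zmod_val]
    conv_lhs => rw [this]
    push_cast
    rw [hbez]
    ring
end
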